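/- Let k be a field of characteristic ≠ 2. The three Hopf algebras H_4 ⊗ H_4, H_{16,0}, and H_{16,1} are pairwise non-isomorphic as Hopf algebras. -/

import Mathlib

open TensorProduct

noncomputable section

/-- `H` is (a model of) Sweedler's 4-dimensional Hopf algebra `H₄` with generators `g`, `x`:
`g² = 1`, `x² = 0`, `xg = -gx`, the family `{1, g, x, gx}` is a basis of `H`, `g` is
group-like, `x` is `(1, g)`-primitive, and `S(g) = g`, `S(x) = -gx`. -/
structure IsSweedler (k : Type*) [CommRing k] (H : Type*) [Ring H] [HopfAlgebra k H]
    (g x : H) : Prop where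
  g_sq : g * g = 1
  x_sq : x * x = 0
  x_mul_g : x * g = -(g * x)
  li : LinearIndependent k ![(1 : H), g, x, g * x]
  span : Submodule.span k {(1 : H), g, x, g * x} = ⊤
  comul_g : Coalgebra.comul (R := k) g = g ⊗ₜ[k] g
  comul_x : Coalgebra.comul (R := k) x = x ⊗ₜ[k] (1 : H) + g ⊗ₜ[k] x
  counit_g : Coalgebra.counit (R := k) g = 1
  counit_x : Coalgebra.counit (R := k) x = 0
  antipode_g : HopfAlgebra.antipode (R := k) g = g
  antipode_x : HopfAlgebra.antipode (R := k) x = -(g * x)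

/-- `E` is (a model of) the Hopf algebra `𝓗_{16, λ}`: it is generated by `g`, `x`, `G`, `X`
subject to the relations `g² = G² = 1`, `x² = X² = 0`, `gx = -xg`, `GX = -XG`, `gG = Gg`,
`gX = -Xg`, `xG = -Gx`, `xX + Xx = λ(1 - Gg)`, the sixteen products of elements of
`{1, G, X, GX}` with elements of `{1, g, x, gx}` form a basis of `E`, the elements
`g`, `G` are group-like, `x` is `(1, g)`-primitive and `X` is `(1, G)`-primitive. -/
structure IsH16 (k : Type*) [CommRing k] (E : Type*) [Ring E] [HopfAlgebra k E]
    (g x G X : E) (lam : k) : Prop where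
  g_sq : g * g = 1
  G_sq : G * G = 1
  x_sq : x * x = 0
  X_sq : X * X = 0
  gx_eq : g * x = -(x * g)
  GX_eq : G * X = -(X * G)
  gG_comm : g * G = G * g
  gX_anticomm : g * X = -(X * g)
  xG_anticomm : x * G = -(G * x)
  xX_rel : x * X + X * x = lam • ((1 : E) - G * g)
  li : LinearIndependent k
    (fun p : Fin 4 × Fin 4 => ![(1 : E), G, X, G * X] p.1 * ![(1 : E), g, x, g * x] p.2)
  span : Submodule.span k
    (Set.range (fun p : Fin 4 × Fin 4 =>
      ![(1 : E), G, X, G * X] p.1 * ![(1 : E), g, x, g * x] p.2)) = ⊤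
  comul_g : Coalgebra.comul (R := k) g = g ⊗ₜ[k] g
  comul_G : Coalgebra.comul (R := k) G = G ⊗ₜ[k] G
  comul_x : Coalgebra.comul (R := k) x = x ⊗ₜ[k] (1 : E) + g ⊗ₜ[k] x
  comul_X : Coalgebra.comul (R := k) X = X ⊗ₜ[k] (1 : E) + G ⊗ₜ[k] X
  counit_g : Coalgebra.counit (R := k) g = 1
  counit_G : Coalgebra.counit (R := k) G = 1
  counit_x : Coalgebra.counit (R := k) x = 0
  counit_X : Coalgebra.counit (R := k) X = 0

universe u

section H16Aux

variable {k : Type*} [CommRing k] {E : Type*} [Ring E] [HopfAlgebra k E]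
  {g x G X : E} {lam : k}

private lemma IsH16.xg' (h : IsH16 k E g x G X lam) : x * g = -(g * x) := by
  rw [h.gx_eq, neg_neg]

private lemma IsH16.Xg' (h : IsH16 k E g x G X lam) : X * g = -(g * X) := by
  rw [h.gX_anticomm, neg_neg]

private lemma IsH16.XG' (h : IsH16 k E g x G X lam) : X * G = -(G * X) := by
  rw [h.GX_eq, neg_neg]

private lemma IsH16.xX' (h : IsH16 k E g x G X lam) :
    x * X = lam • ((1 : E) - G * g) - X * x := by
  rw [← h.xX_rel]; abel

private lemma IsH16.g_g (h : IsH16 k E g x G X lam) (t : E) : g * (g * t) = t := by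
  rw [← mul_assoc, h.g_sq, one_mul]

private lemma IsH16.G_G (h : IsH16 k E g x G X lam) (t : E) : G * (G * t) = t := by
  rw [← mul_assoc, h.G_sq, one_mul]

private lemma IsH16.x_x (h : IsH16 k E g x G X lam) (t : E) : x * (x * t) = 0 := by
  rw [← mul_assoc, h.x_sq, zero_mul]

private lemma IsH16.X_X (h : IsH16 k E g x G X lam) (t : E) : X * (X * t) = 0 := by
  rw [← mul_assoc, h.X_sq, zero_mul]

private lemma IsH16.g_G (h : IsH16 k E g x G X lam) (t : E) : g * (G * t) = G * (g * t) := by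
  rw [← mul_assoc, h.gG_comm, mul_assoc]

private lemma IsH16.g_X (h : IsH16 k E g x G X lam) (t : E) :
    g * (X * t) = -(X * (g * t)) := by
  rw [← mul_assoc, h.gX_anticomm, neg_mul, mul_assoc]

private lemma IsH16.x_G (h : IsH16 k E g x G X lam) (t : E) :
    x * (G * t) = -(G * (x * t)) := by
  rw [← mul_assoc, h.xG_anticomm, neg_mul, mul_assoc]

private lemma IsH16.x_g (h : IsH16 k E g x G X lam) (t : E) :
    x * (g * t) = -(g * (x * t)) := by
  rw [← mul_assoc, h.xg', neg_mul, mul_assoc]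

private lemma IsH16.X_G (h : IsH16 k E g x G X lam) (t : E) :
    X * (G * t) = -(G * (X * t)) := by
  rw [← mul_assoc, h.XG', neg_mul, mul_assoc]

private lemma IsH16.x_X (h : IsH16 k E g x G X lam) (t : E) :
    x * (X * t) = lam • (t - G * (g * t)) - X * (x * t) := by
  rw [← mul_assoc, h.xX', sub_mul, smul_mul_assoc, sub_mul, one_mul, mul_assoc, mul_assoc]

/-- An element commuting with the four generators is central. -/
private lemma IsH16.central_of_gens (h : IsH16 k E g x G X lam) (z : E)
    (h1 : g * z = z * g) (h2 : G * z = z * G) (h3 : x * z = z * x) (h4 : X * z = z * X) :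
    ∀ y : E, z * y = y * z := by
  have c1 : Commute z g := h1.symm
  have c2 : Commute z G := h2.symm
  have c3 : Commute z x := h3.symm
  have c4 : Commute z X := h4.symm
  intro y
  let C : Submodule k E :=
    { carrier := {y | z * y = y * z}
      add_mem' := fun {a b} ha hb => by
        simp only [Set.mem_setOf_eq] at *
        rw [mul_add, add_mul, ha, hb]
      zero_mem' := by simp
      smul_mem' := fun c {a} ha => by
        simp only [Set.mem_setOf_eq] at *
        rw [mul_smul_comm, smul_mul_assoc, ha] }
  have hle : Submodule.span k
      (Set.range (fun p : Fin 4 × Fin 4 =>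
        ![(1 : E), G, X, G * X] p.1 * ![(1 : E), g, x, g * x] p.2)) ≤ C := by
    rw [Submodule.span_le]
    rintro - ⟨⟨i, j⟩, rfl⟩
    have hu : Commute z (![(1 : E), G, X, G * X] i) := by
      fin_cases i
      · exact Commute.one_right z
      · exact c2
      · exact c4
      · exact c2.mul_right c4
    have hv : Commute z (![(1 : E), g, x, g * x] j) := by
      fin_cases j
      · exact Commute.one_right z
      · exact c1
      · exact c3
      · exact c1.mul_right c3
    exact (hu.mul_right hv)
  have htop : (⊤ : Submodule k E) ≤ C := h.span ▸ hle
  exact htop trivial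

/-- `G * g` is central in `𝓗_{16, λ}`. -/
private lemma IsH16.Gg_central (h : IsH16 k E g x G X lam) :
    ∀ y : E, (G * g) * y = y * (G * g) := by
  apply h.central_of_gens
  · rw [h.g_G, h.g_sq, mul_one, mul_assoc, h.g_sq, mul_one]
  · rw [h.G_G, mul_assoc, h.gG_comm, h.G_G]
  · rw [h.x_G, h.xg', mul_neg, neg_neg, mul_assoc]
  · rw [h.X_G, h.Xg', mul_neg, neg_neg, mul_assoc]

end H16Aux
section CenterBound

variable {k : Type*} [Field k] {E : Type*} [Ring E] [HopfAlgebra k E]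
  {g x G X : E}

set_option maxHeartbeats 1600000 in
set_option maxRecDepth 8000 in
/-- Any element of `𝓗_{16,1}` commuting with `g` and `x` lies in an explicit
5-dimensional subspace. -/
private lemma IsH16.center_le (h : IsH16 k E g x G X 1) (hchar : (2 : k) ≠ 0) (z : E)
    (hgz : g * z = z * g) (hxz : x * z = z * x) :
    z ∈ Submodule.span k (Set.range
      ![(1 : E), G * g, g - G + (2 : k) • (G * X * x), X * x - G * X * (g * x),
        X * (g * x) - G * X * x]) := by
  have hz : z ∈ (⊤ : Submodule k E) := trivial
  rw [← h.span, Submodule.mem_span_range_iff_exists_fun] at hz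
  obtain ⟨c, hc⟩ := hz
  simp only [Fintype.sum_prod_type, Fin.sum_univ_four, Matrix.cons_val_zero,
    Matrix.cons_val_one, Matrix.head_cons, Matrix.cons_val_two, Matrix.tail_cons,
    Matrix.cons_val_three, Matrix.head_fin_const, one_mul, mul_one] at hc
  -- stage 1 : commutation with g kills the odd part
  have key1 : ∑ p : Fin 4 × Fin 4,
      (fun p : Fin 4 × Fin 4 =>
        ![![0, 0, 2 * c (0, 3), 2 * c (0, 2)],
          ![0, 0, 2 * c (1, 3), 2 * c (1, 2)],
          ![-(2 * c (2, 1)), -(2 * c (2, 0)), 0, 0],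
          ![-(2 * c (3, 1)), -(2 * c (3, 0)), 0, 0]] p.1 p.2) p •
        (![(1 : E), G, X, G * X] p.1 * ![(1 : E), g, x, g * x] p.2)
      = g * z - z * g := by
    rw [← hc]
    simp only [Fintype.sum_prod_type, Fin.sum_univ_four, Matrix.cons_val_zero,
      Matrix.cons_val_one, Matrix.head_cons, Matrix.cons_val_two, Matrix.tail_cons,
      Matrix.cons_val_three, Matrix.head_fin_const, one_mul, mul_one,
      zero_smul, add_zero, zero_add]
    simp only [mul_add, add_mul, mul_smul_comm, smul_mul_assoc]
    simp only [h.g_g, h.G_G, h.x_x, h.X_X, h.g_G, h.g_X, h.x_G, h.x_g, h.X_G,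
      h.g_sq, h.x_sq, h.X_sq, h.G_sq, h.gG_comm, h.gX_anticomm, h.xG_anticomm,
      h.xg', h.XG', mul_neg, neg_mul, neg_neg, mul_zero, zero_mul, smul_zero,
      smul_neg, mul_one, one_mul, mul_assoc]
    module
  rw [hgz, sub_self] at key1
  have hz1 := Fintype.linearIndependent_iff.mp h.li _ key1
  have e02 : c (0, 2) = 0 := by
    have := hz1 (0, 3); simp only [Matrix.cons_val_zero, Matrix.cons_val_one,
      Matrix.head_cons, Matrix.cons_val_two, Matrix.tail_cons, Matrix.cons_val_three] at this
    exact (mul_eq_zero.mp this).resolve_left hchar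
  have e03 : c (0, 3) = 0 := by
    have := hz1 (0, 2); simp only [Matrix.cons_val_zero, Matrix.cons_val_one,
      Matrix.head_cons, Matrix.cons_val_two, Matrix.tail_cons, Matrix.cons_val_three] at this
    exact (mul_eq_zero.mp this).resolve_left hchar
  have e13 : c (1, 3) = 0 := by
    have := hz1 (1, 2); simp only [Matrix.cons_val_zero, Matrix.cons_val_one,
      Matrix.head_cons, Matrix.cons_val_two, Matrix.tail_cons, Matrix.cons_val_three] at this
    exact (mul_eq_zero.mp this).resolve_left hchar
  have e12 : c (1, 2) = 0 := by
    have := hz1 (1, 3); simp only [Matrix.cons_val_zero, Matrix.cons_val_one,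
      Matrix.head_cons, Matrix.cons_val_two, Matrix.tail_cons, Matrix.cons_val_three] at this
    exact (mul_eq_zero.mp this).resolve_left hchar
  have e21 : c (2, 1) = 0 := by
    have := hz1 (2, 0); simp only [Matrix.cons_val_zero, Matrix.cons_val_one,
      Matrix.head_cons, Matrix.cons_val_two, Matrix.tail_cons, Matrix.cons_val_three, neg_eq_zero] at this
    exact (mul_eq_zero.mp this).resolve_left hchar
  have e20 : c (2, 0) = 0 := by
    have := hz1 (2, 1); simp only [Matrix.cons_val_zero, Matrix.cons_val_one,
      Matrix.head_cons, Matrix.cons_val_two, Matrix.tail_cons, Matrix.cons_val_three, neg_eq_zero] at this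
    exact (mul_eq_zero.mp this).resolve_left hchar
  have e31 : c (3, 1) = 0 := by
    have := hz1 (3, 0); simp only [Matrix.cons_val_zero, Matrix.cons_val_one,
      Matrix.head_cons, Matrix.cons_val_two, Matrix.tail_cons, Matrix.cons_val_three, neg_eq_zero] at this
    exact (mul_eq_zero.mp this).resolve_left hchar
  have e30 : c (3, 0) = 0 := by
    have := hz1 (3, 1); simp only [Matrix.cons_val_zero, Matrix.cons_val_one,
      Matrix.head_cons, Matrix.cons_val_two, Matrix.tail_cons, Matrix.cons_val_three, neg_eq_zero] at this
    exact (mul_eq_zero.mp this).resolve_left hchar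
  simp only [e02, e03, e12, e13, e20, e21, e30, e31, zero_smul, add_zero, zero_add] at hc
  -- stage 2 : commutation with x
  have key2 : ∑ p : Fin 4 × Fin 4,
      (fun p : Fin 4 × Fin 4 =>
        ![![0, 0, c (2, 2) + c (3, 3), c (2, 3) + c (3, 2) - 2 * c (0, 1)],
          ![0, 0, -(2 * c (1, 0)) - c (2, 3) - c (3, 2), -c (2, 2) - c (3, 3)],
          ![0, 0, 0, 0],
          ![0, 0, 0, 0]] p.1 p.2) p •
        (![(1 : E), G, X, G * X] p.1 * ![(1 : E), g, x, g * x] p.2)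
      = x * z - z * x := by
    rw [← hc]
    simp only [Fintype.sum_prod_type, Fin.sum_univ_four, Matrix.cons_val_zero, Matrix.cons_val_one,
      Matrix.head_cons, Matrix.cons_val_two, Matrix.tail_cons, Matrix.cons_val_three,
      Matrix.head_fin_const, one_mul, mul_one, zero_smul, add_zero, zero_add]
    simp only [mul_add, add_mul, mul_sub, sub_mul, mul_smul_comm, smul_mul_assoc]
    simp only [h.g_g, h.G_G, h.x_x, h.X_X, h.g_G, h.g_X, h.x_G, h.x_g, h.X_G, h.x_X,
      h.g_sq, h.x_sq, h.X_sq, h.G_sq, h.gG_comm, h.gX_anticomm, h.xG_anticomm,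
      h.xg', h.XG', h.xX', one_smul, mul_neg, neg_mul, neg_neg, mul_zero, zero_mul,
      smul_zero, smul_neg, sub_zero, zero_sub, mul_one, one_mul, mul_sub, sub_mul,
      mul_assoc]
    module
  rw [hxz, sub_self] at key2
  have hz2 := Fintype.linearIndependent_iff.mp h.li _ key2
  have q1 := hz2 (0, 2)
  have q2 := hz2 (0, 3)
  have q3 := hz2 (1, 2)
  simp only [Matrix.cons_val_zero, Matrix.cons_val_one,
      Matrix.head_cons, Matrix.cons_val_two, Matrix.tail_cons, Matrix.cons_val_three] at q1 q2 q3
  have e33 : c (3, 3) = -c (2, 2) := by linear_combination q1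
  have e32 : c (3, 2) = 2 * c (0, 1) - c (2, 3) := by linear_combination q2
  have e10 : c (1, 0) = -c (0, 1) := by
    have h2 : (2 : k) * (c (1, 0) + c (0, 1)) = 0 := by linear_combination -q3 - q2
    have h3 := (mul_eq_zero.mp h2).resolve_left hchar
    linear_combination h3
  rw [e33, e32, e10] at hc
  rw [Submodule.mem_span_range_iff_exists_fun]
  refine ⟨![c (0, 0), c (1, 1), c (0, 1), c (2, 2), c (2, 3)], ?_⟩
  rw [← hc]
  simp only [Fin.sum_univ_five, Matrix.cons_val_zero, Matrix.cons_val_one,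
      Matrix.head_cons, Matrix.cons_val_two, Matrix.tail_cons, Matrix.cons_val_three, Matrix.cons_val_four, Matrix.head_fin_const]
  module

end CenterBound
section SixCentral

variable {k : Type*} [Field k] {E : Type*} [Ring E] [HopfAlgebra k E]
  {g x G X : E}

set_option maxRecDepth 4000 in
/-- The six elements `1, Gg, Xx, Xgx, GXx, GXgx` are central in `𝓗_{16,0}`. -/
private lemma IsH16.six_central (h : IsH16 k E g x G X 0) (i : Fin 6) :
    ∀ y : E,
      ![(1 : E), G * g, X * x, X * (g * x), G * X * x, G * X * (g * x)] i * y
        = y * ![(1 : E), G * g, X * x, X * (g * x), G * X * x, G * X * (g * x)] i := by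
  fin_cases i
  · intro y; show (1 : E) * y = y * (1 : E); rw [one_mul, mul_one]
  · show ∀ y, (G * g) * y = y * (G * g); exact h.Gg_central
  · show ∀ y, (X * x) * y = y * (X * x)
    apply h.central_of_gens <;>
    · simp only [h.g_g, h.G_G, h.x_x, h.X_X, h.g_G, h.g_X, h.x_G, h.x_g, h.X_G, h.x_X,
        h.g_sq, h.x_sq, h.X_sq, h.G_sq, h.gG_comm, h.gX_anticomm, h.xG_anticomm,
        h.xg', h.XG', h.xX', mul_neg, neg_mul, neg_neg, mul_zero, zero_mul,
        smul_zero, smul_neg, sub_zero, zero_sub, mul_one, one_mul, mul_sub, sub_mul,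
        zero_smul, neg_zero, mul_assoc]
      try module
  · show ∀ y, (X * (g * x)) * y = y * (X * (g * x))
    apply h.central_of_gens <;>
    · simp only [h.g_g, h.G_G, h.x_x, h.X_X, h.g_G, h.g_X, h.x_G, h.x_g, h.X_G, h.x_X,
        h.g_sq, h.x_sq, h.X_sq, h.G_sq, h.gG_comm, h.gX_anticomm, h.xG_anticomm,
        h.xg', h.XG', h.xX', mul_neg, neg_mul, neg_neg, mul_zero, zero_mul,
        smul_zero, smul_neg, sub_zero, zero_sub, mul_one, one_mul, mul_sub, sub_mul,
        zero_smul, neg_zero, mul_assoc]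
      try module
  · show ∀ y, (G * X * x) * y = y * (G * X * x)
    apply h.central_of_gens <;>
    · simp only [h.g_g, h.G_G, h.x_x, h.X_X, h.g_G, h.g_X, h.x_G, h.x_g, h.X_G, h.x_X,
        h.g_sq, h.x_sq, h.X_sq, h.G_sq, h.gG_comm, h.gX_anticomm, h.xG_anticomm,
        h.xg', h.XG', h.xX', mul_neg, neg_mul, neg_neg, mul_zero, zero_mul,
        smul_zero, smul_neg, sub_zero, zero_sub, mul_one, one_mul, mul_sub, sub_mul,
        zero_smul, neg_zero, mul_assoc]
      try module
  · show ∀ y, (G * X * (g * x)) * y = y * (G * X * (g * x))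
    apply h.central_of_gens <;>
    · simp only [h.g_g, h.G_G, h.x_x, h.X_X, h.g_G, h.g_X, h.x_G, h.x_g, h.X_G, h.x_X,
        h.g_sq, h.x_sq, h.X_sq, h.G_sq, h.gG_comm, h.gX_anticomm, h.xG_anticomm,
        h.xg', h.XG', h.xX', mul_neg, neg_mul, neg_neg, mul_zero, zero_mul,
        smul_zero, smul_neg, sub_zero, zero_sub, mul_one, one_mul, mul_sub, sub_mul,
        zero_smul, neg_zero, mul_assoc]
      try module

end SixCentral
section TensorCenter

variable {k : Type*} [Field k]

private lemma IsSweedler.g_g {A : Type*} [Ring A] [HopfAlgebra k A] {g x : A}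
    (h : IsSweedler k A g x) (t : A) : g * (g * t) = t := by
  rw [← mul_assoc, h.g_sq, one_mul]

private lemma IsSweedler.x_x {A : Type*} [Ring A] [HopfAlgebra k A] {g x : A}
    (h : IsSweedler k A g x) (t : A) : x * (x * t) = 0 := by
  rw [← mul_assoc, h.x_sq, zero_mul]

private lemma IsSweedler.x_g {A : Type*} [Ring A] [HopfAlgebra k A] {g x : A}
    (h : IsSweedler k A g x) (t : A) : x * (g * t) = -(g * (x * t)) := by
  rw [← mul_assoc, h.x_mul_g, neg_mul, mul_assoc]

variable {A B : Type*} [Ring A] [HopfAlgebra k A] [Ring B] [HopfAlgebra k B]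
  {gA xA : A} {gB xB : B}

set_option maxHeartbeats 1600000 in
set_option maxRecDepth 8000 in
/-- The center of `H₄ ⊗ H₄` consists of the scalars. -/
private lemma IsSweedler.tensor_center (hA : IsSweedler k A gA xA)
    (hB : IsSweedler k B gB xB) (hchar : (2 : k) ≠ 0) (z : A ⊗[k] B)
    (h1 : (gA ⊗ₜ[k] (1 : B)) * z = z * (gA ⊗ₜ[k] (1 : B)))
    (h2 : ((1 : A) ⊗ₜ[k] gB) * z = z * ((1 : A) ⊗ₜ[k] gB))
    (h3 : (xA ⊗ₜ[k] (1 : B)) * z = z * (xA ⊗ₜ[k] (1 : B)))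
    (h4 : ((1 : A) ⊗ₜ[k] xB) * z = z * ((1 : A) ⊗ₜ[k] xB)) :
    ∃ cc : k, z = cc • 1 := by
  have hrA : Set.range ![(1 : A), gA, xA, gA * xA] = {(1 : A), gA, xA, gA * xA} := by
    ext y
    constructor
    · rintro ⟨i, rfl⟩; fin_cases i <;> simp
    · rintro (rfl | rfl | rfl | rfl)
      exacts [⟨0, rfl⟩, ⟨1, rfl⟩, ⟨2, rfl⟩, ⟨3, rfl⟩]
  have hrB : Set.range ![(1 : B), gB, xB, gB * xB] = {(1 : B), gB, xB, gB * xB} := by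
    ext y
    constructor
    · rintro ⟨i, rfl⟩; fin_cases i <;> simp
    · rintro (rfl | rfl | rfl | rfl)
      exacts [⟨0, rfl⟩, ⟨1, rfl⟩, ⟨2, rfl⟩, ⟨3, rfl⟩]
  let bA : Module.Basis (Fin 4) k A := Module.Basis.mk hA.li (by rw [hrA, hA.span])
  let bB : Module.Basis (Fin 4) k B := Module.Basis.mk hB.li (by rw [hrB, hB.span])
  let bT : Module.Basis (Fin 4 × Fin 4) k (A ⊗[k] B) := bA.tensorProduct bB
  have hfam : ⇑bT = fun p : Fin 4 × Fin 4 =>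
      ![(1 : A), gA, xA, gA * xA] p.1 ⊗ₜ[k] ![(1 : B), gB, xB, gB * xB] p.2 := by
    funext p
    obtain ⟨i, j⟩ := p
    rw [show bT (i, j) = bA i ⊗ₜ[k] bB j from Module.Basis.tensorProduct_apply bA bB i j]
    simp [bA, bB]
  have hli : LinearIndependent k (fun p : Fin 4 × Fin 4 =>
      ![(1 : A), gA, xA, gA * xA] p.1 ⊗ₜ[k] ![(1 : B), gB, xB, gB * xB] p.2) := by
    have := bT.linearIndependent; rwa [hfam] at this
  have hz : z ∈ Submodule.span k (Set.range (fun p : Fin 4 × Fin 4 =>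
      ![(1 : A), gA, xA, gA * xA] p.1 ⊗ₜ[k] ![(1 : B), gB, xB, gB * xB] p.2)) := by
    rw [← hfam, bT.span_eq]; trivial
  rw [Submodule.mem_span_range_iff_exists_fun] at hz
  obtain ⟨c, hc⟩ := hz
  simp only [Fintype.sum_prod_type, Fin.sum_univ_four, Matrix.cons_val_zero,
    Matrix.cons_val_one, Matrix.head_cons, Matrix.cons_val_two, Matrix.tail_cons,
    Matrix.cons_val_three, Matrix.head_fin_const] at hc
  -- stage 1 : commutation with gA ⊗ 1
  have key1 : ∑ p : Fin 4 × Fin 4,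
      (fun p : Fin 4 × Fin 4 =>
        ![![0, 0, 0, 0], ![0, 0, 0, 0],
          ![2 * c (3, 0), 2 * c (3, 1), 2 * c (3, 2), 2 * c (3, 3)],
          ![2 * c (2, 0), 2 * c (2, 1), 2 * c (2, 2), 2 * c (2, 3)]] p.1 p.2) p •
        (![(1 : A), gA, xA, gA * xA] p.1 ⊗ₜ[k] ![(1 : B), gB, xB, gB * xB] p.2)
      = (gA ⊗ₜ[k] (1 : B)) * z - z * (gA ⊗ₜ[k] (1 : B)) := by
    rw [← hc]
    simp only [Fintype.sum_prod_type, Fin.sum_univ_four, Matrix.cons_val_zero,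
      Matrix.cons_val_one, Matrix.head_cons, Matrix.cons_val_two, Matrix.tail_cons,
      Matrix.cons_val_three, Matrix.head_fin_const, zero_smul, add_zero, zero_add]
    simp only [mul_add, add_mul, mul_smul_comm, smul_mul_assoc,
      Algebra.TensorProduct.tmul_mul_tmul, one_mul, mul_one]
    simp only [hA.g_g, hA.x_x, hA.x_g, hB.g_g, hB.x_x, hB.x_g, hA.g_sq, hA.x_sq,
      hA.x_mul_g, hB.g_sq, hB.x_sq, hB.x_mul_g, mul_neg, neg_mul, neg_neg, mul_zero,
      zero_mul, mul_one, one_mul, mul_assoc, TensorProduct.neg_tmul,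
      TensorProduct.tmul_neg, TensorProduct.zero_tmul, TensorProduct.tmul_zero,
      smul_neg, smul_zero]
    module
  rw [h1, sub_self] at key1
  have hz1 := Fintype.linearIndependent_iff.mp hli _ key1
  have e20 : c (2, 0) = 0 := by
    have := hz1 (3, 0); simp only [Matrix.cons_val_zero, Matrix.cons_val_one,
      Matrix.head_cons, Matrix.cons_val_two, Matrix.tail_cons, Matrix.cons_val_three] at this
    exact (mul_eq_zero.mp this).resolve_left hchar
  have e21 : c (2, 1) = 0 := by
    have := hz1 (3, 1); simp only [Matrix.cons_val_zero, Matrix.cons_val_one,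
      Matrix.head_cons, Matrix.cons_val_two, Matrix.tail_cons, Matrix.cons_val_three] at this
    exact (mul_eq_zero.mp this).resolve_left hchar
  have e22 : c (2, 2) = 0 := by
    have := hz1 (3, 2); simp only [Matrix.cons_val_zero, Matrix.cons_val_one,
      Matrix.head_cons, Matrix.cons_val_two, Matrix.tail_cons, Matrix.cons_val_three] at this
    exact (mul_eq_zero.mp this).resolve_left hchar
  have e23 : c (2, 3) = 0 := by
    have := hz1 (3, 3); simp only [Matrix.cons_val_zero, Matrix.cons_val_one,
      Matrix.head_cons, Matrix.cons_val_two, Matrix.tail_cons, Matrix.cons_val_three] at this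
    exact (mul_eq_zero.mp this).resolve_left hchar
  have e30 : c (3, 0) = 0 := by
    have := hz1 (2, 0); simp only [Matrix.cons_val_zero, Matrix.cons_val_one,
      Matrix.head_cons, Matrix.cons_val_two, Matrix.tail_cons, Matrix.cons_val_three] at this
    exact (mul_eq_zero.mp this).resolve_left hchar
  have e31 : c (3, 1) = 0 := by
    have := hz1 (2, 1); simp only [Matrix.cons_val_zero, Matrix.cons_val_one,
      Matrix.head_cons, Matrix.cons_val_two, Matrix.tail_cons, Matrix.cons_val_three] at this
    exact (mul_eq_zero.mp this).resolve_left hchar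
  have e32 : c (3, 2) = 0 := by
    have := hz1 (2, 2); simp only [Matrix.cons_val_zero, Matrix.cons_val_one,
      Matrix.head_cons, Matrix.cons_val_two, Matrix.tail_cons, Matrix.cons_val_three] at this
    exact (mul_eq_zero.mp this).resolve_left hchar
  have e33 : c (3, 3) = 0 := by
    have := hz1 (2, 3); simp only [Matrix.cons_val_zero, Matrix.cons_val_one,
      Matrix.head_cons, Matrix.cons_val_two, Matrix.tail_cons, Matrix.cons_val_three] at this
    exact (mul_eq_zero.mp this).resolve_left hchar
  simp only [e20, e21, e22, e23, e30, e31, e32, e33, zero_smul, add_zero, zero_add] at hc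
  -- stage 2 : commutation with 1 ⊗ gB
  have key2 : ∑ p : Fin 4 × Fin 4,
      (fun p : Fin 4 × Fin 4 =>
        ![![0, 0, 2 * c (0, 3), 2 * c (0, 2)],
          ![0, 0, 2 * c (1, 3), 2 * c (1, 2)],
          ![0, 0, 0, 0], ![0, 0, 0, 0]] p.1 p.2) p •
        (![(1 : A), gA, xA, gA * xA] p.1 ⊗ₜ[k] ![(1 : B), gB, xB, gB * xB] p.2)
      = ((1 : A) ⊗ₜ[k] gB) * z - z * ((1 : A) ⊗ₜ[k] gB) := by
    rw [← hc]
    simp only [Fintype.sum_prod_type, Fin.sum_univ_four, Matrix.cons_val_zero,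
      Matrix.cons_val_one, Matrix.head_cons, Matrix.cons_val_two, Matrix.tail_cons,
      Matrix.cons_val_three, Matrix.head_fin_const, zero_smul, add_zero, zero_add]
    simp only [mul_add, add_mul, mul_smul_comm, smul_mul_assoc,
      Algebra.TensorProduct.tmul_mul_tmul, one_mul, mul_one]
    simp only [hA.g_g, hA.x_x, hA.x_g, hB.g_g, hB.x_x, hB.x_g, hA.g_sq, hA.x_sq,
      hA.x_mul_g, hB.g_sq, hB.x_sq, hB.x_mul_g, mul_neg, neg_mul, neg_neg, mul_zero,
      zero_mul, mul_one, one_mul, mul_assoc, TensorProduct.neg_tmul,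
      TensorProduct.tmul_neg, TensorProduct.zero_tmul, TensorProduct.tmul_zero,
      smul_neg, smul_zero]
    module
  rw [h2, sub_self] at key2
  have hz2 := Fintype.linearIndependent_iff.mp hli _ key2
  have f02 : c (0, 2) = 0 := by
    have := hz2 (0, 3); simp only [Matrix.cons_val_zero, Matrix.cons_val_one,
      Matrix.head_cons, Matrix.cons_val_two, Matrix.tail_cons, Matrix.cons_val_three] at this
    exact (mul_eq_zero.mp this).resolve_left hchar
  have f03 : c (0, 3) = 0 := by
    have := hz2 (0, 2); simp only [Matrix.cons_val_zero, Matrix.cons_val_one,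
      Matrix.head_cons, Matrix.cons_val_two, Matrix.tail_cons, Matrix.cons_val_three] at this
    exact (mul_eq_zero.mp this).resolve_left hchar
  have f12 : c (1, 2) = 0 := by
    have := hz2 (1, 3); simp only [Matrix.cons_val_zero, Matrix.cons_val_one,
      Matrix.head_cons, Matrix.cons_val_two, Matrix.tail_cons, Matrix.cons_val_three] at this
    exact (mul_eq_zero.mp this).resolve_left hchar
  have f13 : c (1, 3) = 0 := by
    have := hz2 (1, 2); simp only [Matrix.cons_val_zero, Matrix.cons_val_one,
      Matrix.head_cons, Matrix.cons_val_two, Matrix.tail_cons, Matrix.cons_val_three] at this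
    exact (mul_eq_zero.mp this).resolve_left hchar
  simp only [f02, f03, f12, f13, zero_smul, add_zero, zero_add] at hc
  -- stage 3 : commutation with xA ⊗ 1
  have key3 : ∑ p : Fin 4 × Fin 4,
      (fun p : Fin 4 × Fin 4 =>
        ![![0, 0, 0, 0], ![0, 0, 0, 0], ![0, 0, 0, 0],
          ![-(2 * c (1, 0)), -(2 * c (1, 1)), 0, 0]] p.1 p.2) p •
        (![(1 : A), gA, xA, gA * xA] p.1 ⊗ₜ[k] ![(1 : B), gB, xB, gB * xB] p.2)
      = (xA ⊗ₜ[k] (1 : B)) * z - z * (xA ⊗ₜ[k] (1 : B)) := by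
    rw [← hc]
    simp only [Fintype.sum_prod_type, Fin.sum_univ_four, Matrix.cons_val_zero,
      Matrix.cons_val_one, Matrix.head_cons, Matrix.cons_val_two, Matrix.tail_cons,
      Matrix.cons_val_three, Matrix.head_fin_const, zero_smul, add_zero, zero_add]
    simp only [mul_add, add_mul, mul_smul_comm, smul_mul_assoc,
      Algebra.TensorProduct.tmul_mul_tmul, one_mul, mul_one]
    simp only [hA.g_g, hA.x_x, hA.x_g, hB.g_g, hB.x_x, hB.x_g, hA.g_sq, hA.x_sq,
      hA.x_mul_g, hB.g_sq, hB.x_sq, hB.x_mul_g, mul_neg, neg_mul, neg_neg, mul_zero,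
      zero_mul, mul_one, one_mul, mul_assoc, TensorProduct.neg_tmul,
      TensorProduct.tmul_neg, TensorProduct.zero_tmul, TensorProduct.tmul_zero,
      smul_neg, smul_zero]
    module
  rw [h3, sub_self] at key3
  have hz3 := Fintype.linearIndependent_iff.mp hli _ key3
  have g10 : c (1, 0) = 0 := by
    have := hz3 (3, 0); simp only [Matrix.cons_val_zero, Matrix.cons_val_one,
      Matrix.head_cons, Matrix.cons_val_two, Matrix.tail_cons, Matrix.cons_val_three,
      neg_eq_zero] at this
    exact (mul_eq_zero.mp this).resolve_left hchar
  have g11 : c (1, 1) = 0 := by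
    have := hz3 (3, 1); simp only [Matrix.cons_val_zero, Matrix.cons_val_one,
      Matrix.head_cons, Matrix.cons_val_two, Matrix.tail_cons, Matrix.cons_val_three,
      neg_eq_zero] at this
    exact (mul_eq_zero.mp this).resolve_left hchar
  simp only [g10, g11, zero_smul, add_zero, zero_add] at hc
  -- stage 4 : commutation with 1 ⊗ xB
  have key4 : ∑ p : Fin 4 × Fin 4,
      (fun p : Fin 4 × Fin 4 =>
        ![![0, 0, 0, -(2 * c (0, 1))], ![0, 0, 0, 0], ![0, 0, 0, 0],
          ![0, 0, 0, 0]] p.1 p.2) p •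
        (![(1 : A), gA, xA, gA * xA] p.1 ⊗ₜ[k] ![(1 : B), gB, xB, gB * xB] p.2)
      = ((1 : A) ⊗ₜ[k] xB) * z - z * ((1 : A) ⊗ₜ[k] xB) := by
    rw [← hc]
    simp only [Fintype.sum_prod_type, Fin.sum_univ_four, Matrix.cons_val_zero,
      Matrix.cons_val_one, Matrix.head_cons, Matrix.cons_val_two, Matrix.tail_cons,
      Matrix.cons_val_three, Matrix.head_fin_const, zero_smul, add_zero, zero_add]
    simp only [mul_add, add_mul, mul_smul_comm, smul_mul_assoc,
      Algebra.TensorProduct.tmul_mul_tmul, one_mul, mul_one]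
    simp only [hA.g_g, hA.x_x, hA.x_g, hB.g_g, hB.x_x, hB.x_g, hA.g_sq, hA.x_sq,
      hA.x_mul_g, hB.g_sq, hB.x_sq, hB.x_mul_g, mul_neg, neg_mul, neg_neg, mul_zero,
      zero_mul, mul_one, one_mul, mul_assoc, TensorProduct.neg_tmul,
      TensorProduct.tmul_neg, TensorProduct.zero_tmul, TensorProduct.tmul_zero,
      smul_neg, smul_zero]
    module
  rw [h4, sub_self] at key4
  have hz4 := Fintype.linearIndependent_iff.mp hli _ key4
  have g01 : c (0, 1) = 0 := by
    have := hz4 (0, 3); simp only [Matrix.cons_val_zero, Matrix.cons_val_one,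
      Matrix.head_cons, Matrix.cons_val_two, Matrix.tail_cons, Matrix.cons_val_three,
      neg_eq_zero] at this
    exact (mul_eq_zero.mp this).resolve_left hchar
  simp only [g01, zero_smul, add_zero, zero_add] at hc
  exact ⟨c (0, 0), by rw [← hc, Algebra.TensorProduct.one_def]⟩

end TensorCenter
section Glue

variable {k : Type*} [Field k]

/-- A Hopf algebra isomorphic to an `𝓗_{16,λ}` cannot be `H₄ ⊗ H₄`: the former has the
nonscalar central element `Gg`, while the center of the latter is trivial. -/
private lemma no_tensor_iso {A B E : Type*} [Ring A] [HopfAlgebra k A]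
    [Ring B] [HopfAlgebra k B] [Ring E] [HopfAlgebra k E]
    {gA xA : A} {gB xB : B} {g x G X : E} {lam : k}
    (hA : IsSweedler k A gA xA) (hB : IsSweedler k B gB xB)
    (hE : IsH16 k E g x G X lam) (hchar : (2 : k) ≠ 0) :
    ¬ Nonempty ((A ⊗[k] B) ≃ₐc[k] E) := by
  rintro ⟨φ⟩
  set ψ : (A ⊗[k] B) ≃ₐ[k] E := φ.toAlgEquiv with hψ
  have hcen := hE.Gg_central
  set w : A ⊗[k] B := ψ.symm (G * g) with hw
  have hψw : ψ w = G * g := ψ.apply_symm_apply _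
  have hcomm : ∀ t : A ⊗[k] B, w * t = t * w := by
    intro t
    apply ψ.injective
    rw [map_mul, map_mul, hψw]
    exact hcen (ψ t)
  obtain ⟨cc, hcc⟩ := hA.tensor_center hB hchar w
    (hcomm _).symm (hcomm _).symm (hcomm _).symm (hcomm _).symm
  have hGg : G * g = cc • (1 : E) := by
    have h' := congrArg ψ hcc
    rwa [hψw, map_smul, map_one] at h'
  have key : ∑ p : Fin 4 × Fin 4,
      (fun p : Fin 4 × Fin 4 =>
        ![![-cc, 0, 0, 0], ![0, 1, 0, 0], ![0, 0, 0, 0], ![0, 0, 0, 0]] p.1 p.2) p •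
      (![(1 : E), G, X, G * X] p.1 * ![(1 : E), g, x, g * x] p.2) = 0 := by
    simp only [Fintype.sum_prod_type, Fin.sum_univ_four, Matrix.cons_val_zero,
      Matrix.cons_val_one, Matrix.head_cons, Matrix.cons_val_two, Matrix.tail_cons,
      Matrix.cons_val_three, Matrix.head_fin_const, zero_smul, add_zero, zero_add,
      one_mul, mul_one, one_smul]
    rw [hGg]
    module
  have h10 := Fintype.linearIndependent_iff.mp hE.li _ key (1, 1)
  simp only [Matrix.cons_val_zero, Matrix.cons_val_one, Matrix.head_cons] at h10
  exact one_ne_zero h10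

end Glue
section Glue2

variable {k : Type*} [Field k]

/-- `𝓗_{16,0}` and `𝓗_{16,1}` are not isomorphic: the center of the former is
6-dimensional, that of the latter 5-dimensional. -/
private lemma no_h16_iso {E₀ E₁ : Type*} [Ring E₀] [HopfAlgebra k E₀]
    [Ring E₁] [HopfAlgebra k E₁] {g₀ x₀ G₀ X₀ : E₀} {g₁ x₁ G₁ X₁ : E₁}
    (hE₀ : IsH16 k E₀ g₀ x₀ G₀ X₀ 0) (hE₁ : IsH16 k E₁ g₁ x₁ G₁ X₁ 1)
    (hchar : (2 : k) ≠ 0) :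
    ¬ Nonempty (E₀ ≃ₐc[k] E₁) := by
  rintro ⟨φ⟩
  classical
  set ψ : E₀ ≃ₐ[k] E₁ := φ.toAlgEquiv with hψ
  set Z6 : Fin 6 → E₀ :=
    ![(1 : E₀), G₀ * g₀, X₀ * x₀, X₀ * (g₀ * x₀), G₀ * X₀ * x₀, G₀ * X₀ * (g₀ * x₀)]
    with hZ6
  have hZc : ∀ i, ∀ y, Z6 i * y = y * Z6 i := hE₀.six_central
  have hZli : LinearIndependent k Z6 := by
    have hι : Function.Injective
        (![(0, 0), (1, 1), (2, 2), (2, 3), (3, 2), (3, 3)] :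
          Fin 6 → Fin 4 × Fin 4) := by decide
    have hli := hE₀.li.comp _ hι
    have heq : (fun p : Fin 4 × Fin 4 =>
        ![(1 : E₀), G₀, X₀, G₀ * X₀] p.1 * ![(1 : E₀), g₀, x₀, g₀ * x₀] p.2) ∘
        (![(0, 0), (1, 1), (2, 2), (2, 3), (3, 2), (3, 3)] :
          Fin 6 → Fin 4 × Fin 4) = Z6 := by
      funext i
      fin_cases i
      · show (1 : E₀) * 1 = 1; rw [one_mul]
      · rfl
      · rfl
      · rfl
      · rfl
      · rfl
    rwa [heq] at hli
  -- the images are central in E₁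
  have hcent : ∀ i, ∀ y : E₁, ψ (Z6 i) * y = y * ψ (Z6 i) := by
    intro i y
    have h' := hZc i (ψ.symm y)
    calc ψ (Z6 i) * y = ψ (Z6 i) * ψ (ψ.symm y) := by rw [ψ.apply_symm_apply]
      _ = ψ (Z6 i * ψ.symm y) := (map_mul ψ _ _).symm
      _ = ψ (ψ.symm y * Z6 i) := by rw [h']
      _ = ψ (ψ.symm y) * ψ (Z6 i) := map_mul ψ _ _
      _ = y * ψ (Z6 i) := by rw [ψ.apply_symm_apply]
  have hW : ∀ i, ψ (Z6 i) ∈ Submodule.span k (Set.range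
      ![(1 : E₁), G₁ * g₁, g₁ - G₁ + (2 : k) • (G₁ * X₁ * x₁),
        X₁ * x₁ - G₁ * X₁ * (g₁ * x₁), X₁ * (g₁ * x₁) - G₁ * X₁ * x₁]) :=
    fun i => hE₁.center_le hchar _ (hcent i g₁).symm (hcent i x₁).symm
  set W : Submodule k E₁ := Submodule.span k (Set.range
      ![(1 : E₁), G₁ * g₁, g₁ - G₁ + (2 : k) • (G₁ * X₁ * x₁),
        X₁ * x₁ - G₁ * X₁ * (g₁ * x₁), X₁ * (g₁ * x₁) - G₁ * X₁ * x₁]) with hWdef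
  have hζli : LinearIndependent k (fun i => ψ (Z6 i)) := by
    have := hZli.map' ψ.toLinearMap (LinearMap.ker_eq_bot.mpr ψ.injective)
    exact this
  haveI : Module.Finite k W := FiniteDimensional.span_of_finite k (Set.finite_range _)
  have h6 : 6 ≤ Module.finrank k W := by
    have hli' : LinearIndependent k (fun i : Fin 6 => (⟨ψ (Z6 i), hW i⟩ : W)) := by
      apply LinearIndependent.of_comp W.subtype
      exact hζli
    simpa using hli'.fintype_card_le_finrank
  have h5 : Module.finrank k W ≤ 5 := by
    calc Module.finrank k W ≤ (Set.range
        ![(1 : E₁), G₁ * g₁, g₁ - G₁ + (2 : k) • (G₁ * X₁ * x₁),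
          X₁ * x₁ - G₁ * X₁ * (g₁ * x₁), X₁ * (g₁ * x₁) - G₁ * X₁ * x₁]).toFinset.card :=
        finrank_span_le_card _
      _ ≤ 5 := by
        rw [Set.toFinset_range]
        exact le_trans Finset.card_image_le (by simp)
  omega

end Glue2
/-- Over a field `k` of characteristic `≠ 2`, the three Hopf algebras `H₄ ⊗ H₄`,
`𝓗_{16, 0}` and `𝓗_{16, 1}` are pairwise non-isomorphic. -/
theorem tensor_h16zero_h16one_pairwise_nonisomorphic
    {k : Type u} [Field k] (hchar : (2 : k) ≠ 0)
    {A : Type u} [Ring A] [HopfAlgebra k A] {gA xA : A} (hA : IsSweedler k A gA xA)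
    {B : Type u} [Ring B] [HopfAlgebra k B] {gB xB : B} (hB : IsSweedler k B gB xB)
    {E₀ : Type u} [Ring E₀] [HopfAlgebra k E₀] {g₀ x₀ G₀ X₀ : E₀}
    (hE₀ : IsH16 k E₀ g₀ x₀ G₀ X₀ 0)
    {E₁ : Type u} [Ring E₁] [HopfAlgebra k E₁] {g₁ x₁ G₁ X₁ : E₁}
    (hE₁ : IsH16 k E₁ g₁ x₁ G₁ X₁ 1) :
    ¬ Nonempty ((A ⊗[k] B) ≃ₐc[k] E₀) ∧
    ¬ Nonempty ((A ⊗[k] B) ≃ₐc[k] E₁) ∧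
    ¬ Nonempty (E₀ ≃ₐc[k] E₁) :=
  ⟨no_tensor_iso hA hB hE₀ hchar, no_tensor_iso hA hB hE₁ hchar,
    no_h16_iso hE₀ hE₁ hchar⟩

end
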